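/- Let θ : (-T, 0] → ℝ be differentiable with θ'(t) ≤ -θ(t)²/3 and θ(0) ≥ b > 0. Then T ≤ 3/b; i.e., the expansion diverges to +∞ within proper time 3/b to the past. -/

import Mathlib

/-- past focusing lemma. If `θ` is differentiable on `(-T,0]` with
`θ' ≤ -θ²/3` there, and `θ 0 ≥ b > 0`, then `T ≤ 3/b`. -/
theorem focusing_past (θ : ℝ → ℝ) (T b : ℝ)
    (hdiff : ∀ t ∈ Set.Ioc (-T) (0 : ℝ), DifferentiableAt ℝ θ t)
    (hray : ∀ t ∈ Set.Ioc (-T) (0 : ℝ), deriv θ t ≤ -(θ t) ^ 2 / 3)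
    (hb : 0 < b) (h0 : b ≤ θ 0) :
    T ≤ 3 / b := by
  by_contra hc
  push_neg at hc
  have h3b : (0:ℝ) < 3 / b := by positivity
  have hT : 0 < T := lt_trans h3b hc
  have h0mem : (0:ℝ) ∈ Set.Ioc (-T) 0 := ⟨by linarith, le_refl _⟩
  have hint : interior (Set.Ioc (-T) (0:ℝ)) = Set.Ioo (-T) 0 := interior_Ioc
  have hcont : ContinuousOn θ (Set.Ioc (-T) 0) := fun t ht =>
    (hdiff t ht).continuousAt.continuousWithinAt
  have hanti : AntitoneOn θ (Set.Ioc (-T) 0) := by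
    apply antitoneOn_of_deriv_nonpos (convex_Ioc _ _) hcont
    · rw [hint]
      exact fun x hx => (hdiff x (Set.Ioo_subset_Ioc_self hx)).differentiableWithinAt
    · intro x hx
      rw [hint] at hx
      have := hray x (Set.Ioo_subset_Ioc_self hx)
      nlinarith [sq_nonneg (θ x)]
  have hθb : ∀ t ∈ Set.Ioc (-T) (0:ℝ), b ≤ θ t := fun t ht =>
    le_trans h0 (hanti ht h0mem ht.2)
  -- the comparison function
  set g : ℝ → ℝ := fun t => (θ t)⁻¹ - t / 3 with hg
  have hgderiv : ∀ x ∈ Set.Ioc (-T) (0:ℝ),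
      HasDerivAt g (-deriv θ x / θ x ^ 2 - 1 / 3) x := by
    intro x hx
    have hne : θ x ≠ 0 := ne_of_gt (lt_of_lt_of_le hb (hθb x hx))
    have h1 : HasDerivAt θ (deriv θ x) x := (hdiff x hx).hasDerivAt
    have h2 := (h1.inv hne).sub ((hasDerivAt_id x).div_const 3)
    exact h2
  have hmono : MonotoneOn g (Set.Ioc (-T) 0) := by
    apply monotoneOn_of_deriv_nonneg (convex_Ioc _ _)
    · exact fun t ht => ((hgderiv t ht).differentiableAt).continuousAt.continuousWithinAt
    · rw [hint]
      exact fun x hx =>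
        ((hgderiv x (Set.Ioo_subset_Ioc_self hx)).differentiableAt).differentiableWithinAt
    · intro x hx
      rw [hint] at hx
      have hxm := Set.Ioo_subset_Ioc_self hx
      rw [(hgderiv x hxm).deriv]
      have hθx : b ≤ θ x := hθb x hxm
      have hθ2 : (0:ℝ) < θ x ^ 2 := pow_pos (lt_of_lt_of_le hb hθx) 2
      have hr := hray x hxm
      have h13 : (1:ℝ)/3 ≤ -deriv θ x / θ x ^ 2 := by
        rw [le_div_iff₀ hθ2]; nlinarith
      linarith
  -- pick the witness point
  set t : ℝ := -((T + 3 / b) / 2) with ht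
  have htmem : t ∈ Set.Ioc (-T) (0:ℝ) := ⟨by simp only [ht]; linarith, by simp only [ht]; linarith⟩
  have hle : g t ≤ g 0 := hmono htmem h0mem htmem.2
  have hθt : b ≤ θ t := hθb t htmem
  have hinv0 : (θ 0)⁻¹ ≤ 1 / b := by
    rw [one_div]
    exact inv_anti₀ hb h0
  have hinvt : 0 < (θ t)⁻¹ := inv_pos.mpr (lt_of_lt_of_le hb hθt)
  simp only [hg] at hle
  have : -t / 3 < 1 / b := by
    have : (θ t)⁻¹ - t / 3 ≤ (θ 0)⁻¹ - 0 / 3 := hle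
    linarith
  rw [ht] at this
  have hbpos : (0:ℝ) < b := hb
  rw [div_lt_div_iff₀ (by norm_num) hbpos] at this
  have h3b' : 3 / b * b = 3 := by field_simp
  nlinarith [hc, hb, mul_pos (sub_pos.mpr hc) hb]
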